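/- Let 𝕋 be an almost periodic time scale (Π ≠ {0}) and u ∈ U_∞^Inv. If f : ℝ → ℝ is Lipschitz continuous, φ ∈ PAP(𝕋,ℝ,u), and τ ∈ Π, then the function Γ : 𝕋 → ℝ, Γ(t) = f(φ(t − τ)), belongs to PAP(𝕋,ℝ,u). -/

import Mathlib

open MeasureTheory Filter Set

noncomputable section

/-- Forward jump operator of a time scale `T`. -/
def tsSigma (T : Set ℝ) (t : ℝ) : ℝ := sInf {s | s ∈ T ∧ t < s}

/-- Graininess of a time scale. -/
def tsGrain (T : Set ℝ) (t : ℝ) : ℝ := tsSigma T t - t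

/-- The set `Π` of translation numbers of a time scale. -/
def tsPi (T : Set ℝ) : Set ℝ := {τ : ℝ | ∀ t ∈ T, t + τ ∈ T ∧ t - τ ∈ T}

/-- An almost periodic time scale: a nonempty closed subset of `ℝ` with `Π ≠ {0}`. -/
def APTimeScale (T : Set ℝ) : Prop :=
  T.Nonempty ∧ IsClosed T ∧ ∃ τ ∈ tsPi T, τ ≠ 0

/-- The Δ-measure of the time scale `T`:
Lebesgue measure restricted to `T` plus point masses `μ(t)·δ_t` at right-scattered points. -/
def deltaMeasure (T : Set ℝ) : Measure ℝ :=
  volume.restrict T +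
    Measure.sum (fun p : {t : ℝ // t ∈ T ∧ t < tsSigma T t} =>
      (ENNReal.ofReal (tsGrain T p.1)) • Measure.dirac (p.1 : ℝ))

/-- The integrand `g_a` appearing in the generalized exponential function. -/
def gExp (T : Set ℝ) (a : ℝ) (τ : ℝ) : ℝ :=
  if 0 < tsGrain T τ then Real.log (1 + tsGrain T τ * a) / tsGrain T τ else a

/-- The generalized exponential function `e_{⊖a}(t, s)` (intended for `s ≤ t`). -/
def eOminus (T : Set ℝ) (a t s : ℝ) : ℝ :=
  Real.exp (-∫ τ in Ico s t ∩ T, gExp T a τ ∂(deltaMeasure T))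

/-- `t̄ = min([0,∞) ∩ T)`. -/
def tsT0 (T : Set ℝ) : ℝ := sInf {t : ℝ | t ∈ T ∧ 0 ≤ t}

/-- `Q_r = [t̄ - r, t̄ + r] ∩ T`. -/
def Qr (T : Set ℝ) (r : ℝ) : Set ℝ := Icc (tsT0 T - r) (tsT0 T + r) ∩ T

/-- `u(Q_r) = ∫_{Q_r} u dμ_Δ`. -/
def uQ (T : Set ℝ) (u : ℝ → ℝ) (r : ℝ) : ℝ := ∫ t in Qr T r, u t ∂(deltaMeasure T)

/-- The filter `r → ∞` along `Π`. -/
def alongPi (T : Set ℝ) : Filter ℝ := atTop ⊓ 𝓟 (tsPi T)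

/-- The filter `|t| → ∞`, `t ∈ T`. -/
def absAtTopIn (T : Set ℝ) : Filter ℝ := (atTop ⊔ atBot) ⊓ 𝓟 T

/-- The class `U_∞` of admissible weights on the time scale `T`. -/
def UInfty (T : Set ℝ) (u : ℝ → ℝ) : Prop :=
  Measurable u ∧ (∀ t ∈ T, 0 < u t) ∧
  (∀ s : Set ℝ, Bornology.IsBounded s → IntegrableOn u (s ∩ T) (deltaMeasure T)) ∧
  (∃ c > 0, ∀ t ∈ T, c ≤ u t) ∧
  Tendsto (uQ T u) (alongPi T) atTop

/-- The class `U_∞^Inv` of weights: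
`limsup_{|t|→∞, t∈T} u(t+s)/u(t) < ∞` for every `s ∈ Π`. -/
def UInftyInv (T : Set ℝ) (u : ℝ → ℝ) : Prop :=
  UInfty T u ∧ ∀ s ∈ tsPi T, ∃ C : ℝ, ∀ᶠ t in absAtTopIn T, u (t + s) / u t ≤ C

variable {E : Type*} [NormedAddCommGroup E]

/-- Almost periodic functions on a time scale (Bohr-type definition via `Π`). -/
def APfun (T : Set ℝ) (f : ℝ → E) : Prop :=
  ContinuousOn f T ∧
  ∀ ε > 0, ∃ l > 0, ∀ x : ℝ, ∃ τ ∈ tsPi T, τ ∈ Icc x (x + l) ∧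
    ∀ t ∈ T, ‖f (t + τ) - f t‖ < ε

/-- Bounded continuous functions on the time scale `T`. -/
def BCfun (T : Set ℝ) (f : ℝ → E) : Prop :=
  ContinuousOn f T ∧ ∃ C : ℝ, ∀ t ∈ T, ‖f t‖ ≤ C

/-- The weighted ergodic space `PAP₀(T, E, u)`. -/
def PAP0fun (T : Set ℝ) (u : ℝ → ℝ) (f : ℝ → E) : Prop :=
  BCfun T f ∧
  Tendsto (fun r => (uQ T u r)⁻¹ * ∫ t in Qr T r, ‖f t‖ * u t ∂(deltaMeasure T))
    (alongPi T) (nhds 0)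

/-- Weighted pseudo-almost periodic functions on the time scale `T`. -/
def PAPfun (T : Set ℝ) (u : ℝ → ℝ) (f : ℝ → E) : Prop :=
  ∃ g h : ℝ → E, APfun T g ∧ PAP0fun T u h ∧ ∀ t ∈ T, f t = g t + h t

/-- `d` is the Δ-derivative of `f` at `t ∈ T`. -/
def deltaDeriv [NormedSpace ℝ E] (T : Set ℝ) (f : ℝ → E) (t : ℝ) (d : E) : Prop :=
  ∀ ε > 0, ∃ δ > 0, ∀ s ∈ T, |s - t| < δ →
    ‖f (tsSigma T t) - f s - (tsSigma T t - s) • d‖ ≤ ε * |tsSigma T t - s|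

/-- A fixed matrix norm (the ℓ¹ norm of the entries). -/
def matNorm {n : ℕ} (M : Matrix (Fin n) (Fin n) ℝ) : ℝ := ∑ i, ∑ j, |M i j|

/-- The linear system `x^Δ = A(t) x` admits an exponential dichotomy on `T`. -/
def ExpDichotomy {n : ℕ} (T : Set ℝ) (A : ℝ → Matrix (Fin n) (Fin n) ℝ) : Prop :=
  ∃ K > (0 : ℝ), ∃ α > (0 : ℝ), ∃ P : Matrix (Fin n) (Fin n) ℝ, P * P = P ∧
    ∃ X : ℝ → Matrix (Fin n) (Fin n) ℝ,
      (∀ t ∈ T, IsUnit (X t)) ∧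
      (∀ t ∈ T, ∀ i j, deltaDeriv T (fun s => X s i j) t ((A t * X t) i j)) ∧
      (∀ s ∈ T, ∀ t ∈ T, tsSigma T s ≤ t →
        matNorm (X t * P * (X (tsSigma T s))⁻¹) ≤ K * eOminus T α t (tsSigma T s)) ∧
      (∀ s ∈ T, ∀ t ∈ T, t ≤ tsSigma T s →
        matNorm (X t * (1 - P) * (X (tsSigma T s))⁻¹) ≤ K * eOminus T α (tsSigma T s) t)

/-- `x` is a bounded continuous solution on `T` of `x^Δ(t) = A(t) x(t) + F(t)`. -/
def IsLinBddSol {n : ℕ} (T : Set ℝ) (A : ℝ → Matrix (Fin n) (Fin n) ℝ)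
    (F x : ℝ → Fin n → ℝ) : Prop :=
  BCfun T x ∧ ∀ t ∈ T, deltaDeriv T x t ((A t).mulVec (x t) + F t)

/-- `x` is a (continuous, Δ-differentiable) solution of the delayed cellular neural network
on the set `S ⊆ T`. -/
def IsCNNSol {n : ℕ} (T S : Set ℝ) (c : Fin n → ℝ → ℝ) (a b : Fin n → Fin n → ℝ → ℝ)
    (f : Fin n → ℝ → ℝ) (γ : Fin n → Fin n → ℝ) (I : Fin n → ℝ → ℝ)
    (x : ℝ → Fin n → ℝ) : Prop :=
  ContinuousOn x T ∧
  ∀ t ∈ S, ∀ i, deltaDeriv T (fun s => x s i) t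
    (-(c i t) * x t i + (∑ j, a i j t * f j (x t j)) +
      (∑ j, b i j t * f j (x (t - γ i j) j)) + I i t)

end
section AuxTS

variable {T : Set ℝ} {τ σ' : ℝ}

lemma tsPi_neg (hτ : τ ∈ tsPi T) : -τ ∈ tsPi T := fun t ht =>
  ⟨by simpa [sub_eq_add_neg] using (hτ t ht).2, by simpa [sub_neg_eq_add] using (hτ t ht).1⟩

lemma tsPi_add (hτ : τ ∈ tsPi T) (hσ : σ' ∈ tsPi T) : τ + σ' ∈ tsPi T := fun t ht => by
  refine ⟨?_, ?_⟩
  · rw [← add_assoc]; exact (hσ _ (hτ t ht).1).1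
  · rw [sub_add_eq_sub_sub]; exact (hσ _ (hτ t ht).2).2

lemma tsPi_abs (hτ : τ ∈ tsPi T) : |τ| ∈ tsPi T := by
  rcases abs_cases τ with ⟨h, _⟩ | ⟨h, _⟩
  · rwa [h]
  · rw [h]; exact tsPi_neg hτ

lemma mem_add_iff (hτ : τ ∈ tsPi T) {t : ℝ} : t + τ ∈ T ↔ t ∈ T :=
  ⟨fun h => by simpa using (hτ _ h).2, fun h => (hτ t h).1⟩

lemma preimage_add_tsPi (hτ : τ ∈ tsPi T) : (fun t => t + τ) ⁻¹' T = T :=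
  Set.ext fun _ => mem_add_iff hτ

lemma exists_gt_mem (hT : APTimeScale T) {t : ℝ} (ht : t ∈ T) (b : ℝ) :
    ∃ s ∈ T, b < s := by
  obtain ⟨_, _, τ₀, hτ₀, hτ₀ne⟩ := hT
  have hρ : |τ₀| ∈ tsPi T := tsPi_abs hτ₀
  have hρpos : (0:ℝ) < |τ₀| := abs_pos.mpr hτ₀ne
  have hn : ∀ n : ℕ, t + n * |τ₀| ∈ T := by
    intro n
    induction n with
    | zero => simpa using ht
    | succ k ih =>
        have := (hρ _ ih).1
        convert this using 1
        push_cast; ring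
  obtain ⟨n, hn'⟩ := exists_nat_gt ((b - t) / |τ₀|)
  refine ⟨t + n * |τ₀|, hn n, ?_⟩
  have := (div_lt_iff₀ hρpos).1 hn'
  linarith

lemma tsSigma_add (hT : APTimeScale T) (hτ : τ ∈ tsPi T) {t : ℝ} (ht : t ∈ T) :
    tsSigma T (t + τ) = tsSigma T t + τ := by
  have hset : {s | s ∈ T ∧ t + τ < s} = (fun x => x + τ) '' {s | s ∈ T ∧ t < s} := by
    ext s
    constructor
    · rintro ⟨hsT, hlt⟩
      exact ⟨s - τ, ⟨(hτ s hsT).2, by linarith⟩, by ring⟩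
    · rintro ⟨x, ⟨hxT, hlt⟩, rfl⟩
      exact ⟨(hτ x hxT).1, by simpa using hlt⟩
  have hne : {s | s ∈ T ∧ t < s}.Nonempty := by
    obtain ⟨s, hs, hlt⟩ := exists_gt_mem hT ht t
    exact ⟨s, hs, hlt⟩
  have hbdd : BddBelow {s | s ∈ T ∧ t < s} := ⟨t, fun s hs => hs.2.le⟩
  have hmono : Monotone (fun x : ℝ => x + τ) := fun a b hab => by simpa using hab
  have hcont : ContinuousAt (fun x : ℝ => x + τ) (sInf {s | s ∈ T ∧ t < s}) :=
    (continuous_id.add continuous_const).continuousAt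
  rw [tsSigma, hset, ← Monotone.map_csInf_of_continuousAt hcont hmono hne hbdd]
  rfl

lemma tsGrain_add (hT : APTimeScale T) (hτ : τ ∈ tsPi T) {t : ℝ} (ht : t ∈ T) :
    tsGrain T (t + τ) = tsGrain T t := by
  rw [tsGrain, tsGrain, tsSigma_add hT hτ ht]; ring

end AuxTS

section AuxMeas

variable {T : Set ℝ} {τ : ℝ}

lemma ae_mem_deltaMeasure (hcl : IsClosed T) : ∀ᵐ t ∂(deltaMeasure T), t ∈ T := by
  have hm : MeasurableSet T := hcl.measurableSet
  rw [ae_iff]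
  have hcm : MeasurableSet {t : ℝ | ¬ t ∈ T} := hm.compl
  rw [deltaMeasure, Measure.add_apply, Measure.restrict_apply hcm,
    Measure.sum_apply _ hcm]
  have h1 : ({t : ℝ | ¬ t ∈ T} ∩ T) = ∅ := by ext x; simp
  rw [h1]
  simp only [measure_empty, zero_add]
  rw [ENNReal.tsum_eq_zero]
  intro p
  rw [Measure.smul_apply, Measure.dirac_apply' _ hcm]
  have : (p : ℝ) ∉ {t : ℝ | ¬ t ∈ T} := by simp [p.2.1]
  rw [Set.indicator_of_notMem this]
  simp

lemma deltaMeasure_restrict_eq (hcl : IsClosed T) :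
    (deltaMeasure T).restrict T = deltaMeasure T :=
  Measure.restrict_eq_self_of_ae_mem (ae_mem_deltaMeasure hcl)

end AuxMeas

/-- Translation of right-scattered points by `τ ∈ Π`. -/
def scatterEquiv {T : Set ℝ} {τ : ℝ} (hT : APTimeScale T) (hτ : τ ∈ tsPi T) :
    {t : ℝ // t ∈ T ∧ t < tsSigma T t} ≃ {t : ℝ // t ∈ T ∧ t < tsSigma T t} where
  toFun p := ⟨p.1 + τ, (hτ _ p.2.1).1, by
    rw [tsSigma_add hT hτ p.2.1]; exact add_lt_add_left p.2.2 τ⟩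
  invFun p := ⟨p.1 - τ, (hτ _ p.2.1).2, by
    have h2 : tsSigma T (p.1 - τ) = tsSigma T p.1 - τ := by
      have := tsSigma_add hT (tsPi_neg hτ) p.2.1
      rw [← sub_eq_add_neg, ← sub_eq_add_neg] at this
      exact this
    rw [h2]; exact sub_lt_sub_right p.2.2 τ⟩
  left_inv p := by ext; simp
  right_inv p := by ext; simp

section AuxMeas2

variable {T : Set ℝ} {τ : ℝ}

lemma deltaMeasure_map (hT : APTimeScale T) (hτ : τ ∈ tsPi T) :
    (deltaMeasure T).map (fun t => t + τ) = deltaMeasure T := by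
  have hm : MeasurableSet T := hT.2.1.measurableSet
  have hmeas : Measurable (fun t : ℝ => t + τ) := measurable_add_const τ
  apply Measure.ext
  intro s hs
  have hps : MeasurableSet ((fun t : ℝ => t + τ) ⁻¹' s) := hmeas hs
  rw [Measure.map_apply hmeas hs]
  rw [deltaMeasure, Measure.add_apply, Measure.add_apply,
    Measure.restrict_apply hps, Measure.restrict_apply hs,
    Measure.sum_apply _ hps, Measure.sum_apply _ hs]
  congr 1
  · have h1 : (fun t : ℝ => t + τ) ⁻¹' s ∩ T = (fun t : ℝ => t + τ) ⁻¹' (s ∩ T) := by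
      rw [Set.preimage_inter, preimage_add_tsPi hτ]
    rw [h1, (measurePreserving_add_right volume τ).measure_preimage
      (hs.inter hm).nullMeasurableSet]
  · rw [← Equiv.tsum_eq (scatterEquiv hT hτ)
      (fun q : {t : ℝ // t ∈ T ∧ t < tsSigma T t} =>
        (ENNReal.ofReal (tsGrain T q.1) • Measure.dirac (q.1 : ℝ)) s)]
    apply tsum_congr
    intro p
    have hco : ((scatterEquiv hT hτ p : {t : ℝ // t ∈ T ∧ t < tsSigma T t}) : ℝ)
        = (p : ℝ) + τ := rfl
    simp only [Measure.smul_apply, smul_eq_mul, hco]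
    rw [Measure.dirac_apply' _ hps, Measure.dirac_apply' _ hs,
      tsGrain_add hT hτ p.2.1]
    congr 1

end AuxMeas2

section AuxCov

open scoped ENNReal

variable {T : Set ℝ} {τ : ℝ}

lemma integral_shift (hT : APTimeScale T) (hτ : τ ∈ tsPi T) {G : ℝ → ℝ}
    (hG : AEStronglyMeasurable G (deltaMeasure T)) :
    ∫ t, G (t + τ) ∂(deltaMeasure T) = ∫ t, G t ∂(deltaMeasure T) := by
  conv_rhs => rw [← deltaMeasure_map hT hτ]
  rw [integral_map (measurable_add_const τ).aemeasurable
    (by rw [deltaMeasure_map hT hτ]; exact hG)]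

lemma integrable_shift_iff (hT : APTimeScale T) (hτ : τ ∈ tsPi T) (G : ℝ → ℝ) :
    Integrable (fun t => G (t + τ)) (deltaMeasure T) ↔ Integrable G (deltaMeasure T) := by
  have hemb := (Homeomorph.addRight τ).measurableEmbedding
  have h2 := hemb.integrable_map_iff (μ := deltaMeasure T) (g := G)
  have hco : ⇑(Homeomorph.addRight τ) = fun t : ℝ => t + τ := rfl
  rw [hco, deltaMeasure_map hT hτ] at h2
  exact h2.symm

lemma setIntegral_shift (hT : APTimeScale T) (hτ : τ ∈ tsPi T) {G : ℝ → ℝ}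
    (hG : AEStronglyMeasurable G (deltaMeasure T)) {A : Set ℝ} (hA : MeasurableSet A) :
    ∫ t in A, G t ∂(deltaMeasure T)
      = ∫ t in (fun t => t + τ) ⁻¹' A, G (t + τ) ∂(deltaMeasure T) := by
  rw [← integral_indicator hA, ← integral_indicator ((measurable_add_const τ) hA),
    ← integral_shift hT hτ (hG.indicator hA)]
  refine integral_congr_ae (Filter.Eventually.of_forall fun t => ?_)
  by_cases h : t + τ ∈ A <;> simp [Set.indicator_apply, h]

lemma integrableOn_shift_iff (hT : APTimeScale T) (hτ : τ ∈ tsPi T) (G : ℝ → ℝ)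
    {A : Set ℝ} (hA : MeasurableSet A) :
    IntegrableOn (fun t => G (t + τ)) ((fun t => t + τ) ⁻¹' A) (deltaMeasure T)
      ↔ IntegrableOn G A (deltaMeasure T) := by
  rw [← integrable_indicator_iff hA, ← integrable_indicator_iff ((measurable_add_const τ) hA),
    ← integrable_shift_iff hT hτ (A.indicator G)]
  have h3 : (fun t => (A.indicator G) (t + τ))
      = ((fun t : ℝ => t + τ) ⁻¹' A).indicator (fun t => G (t + τ)) := by
    funext t; by_cases h : t + τ ∈ A <;> simp [Set.indicator_apply, h]
  rw [h3]

lemma asm_of_continuousOn (hcl : IsClosed T) {G : ℝ → ℝ} (hG : ContinuousOn G T) :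
    AEStronglyMeasurable G (deltaMeasure T) := by
  rw [← deltaMeasure_restrict_eq hcl]
  exact hG.aestronglyMeasurable hcl.measurableSet

lemma absAtTopIn_extract {P : ℝ → Prop} (hP : ∀ᶠ t in absAtTopIn T, P t) :
    ∃ M : ℝ, ∀ t ∈ T, M ≤ |t| → P t := by
  rw [absAtTopIn, Filter.eventually_inf_principal] at hP
  rcases Filter.eventually_sup.mp hP with ⟨h1, h2⟩
  rcases Filter.eventually_atTop.mp h1 with ⟨a, ha⟩
  rcases Filter.eventually_atBot.mp h2 with ⟨b, hb⟩
  refine ⟨max a (-b) + 1, fun t ht hMt => ?_⟩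
  rcases le_or_gt 0 t with h0 | h0
  · have : a ≤ t := by rw [abs_of_nonneg h0] at hMt; have := le_max_left a (-b); linarith
    exact ha t this ht
  · have : t ≤ b := by rw [abs_of_neg h0] at hMt; have := le_max_right a (-b); linarith
    exact hb t this ht

end AuxCov

/-- If `f : ℝ → ℝ` is Lipschitz, `φ ∈ PAP(T,ℝ,u)` (with `u ∈ U_∞^Inv`) and `τ ∈ Π`, then
`t ↦ f(φ(t − τ))` belongs to `PAP(T,ℝ,u)`. -/
theorem pap_lipschitz_comp_delay (T : Set ℝ) (hT : APTimeScale T)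
    (u : ℝ → ℝ) (hu : UInftyInv T u)
    (f : ℝ → ℝ) (L : NNReal) (hf : LipschitzWith L f)
    (φ : ℝ → ℝ) (hφ : PAPfun T u φ) (τ : ℝ) (hτ : τ ∈ tsPi T) :
    PAPfun T u (fun t => f (φ (t - τ))) := by
  obtain ⟨hu1, hinv⟩ := hu
  obtain ⟨hum, hupos, huint, -, huQ⟩ := hu1
  obtain ⟨g, h, ⟨hgc, hgap⟩, ⟨⟨hhc, Ch, hCh⟩, hhlim⟩, hdec⟩ := hφ
  have hcl : IsClosed T := hT.2.1
  have hm : MeasurableSet T := hcl.measurableSet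
  have hτ' : ∀ t ∈ T, t - τ ∈ T := fun t ht => (hτ t ht).2
  have hLnn : (0:ℝ) ≤ L := L.coe_nonneg
  have hCh0 : (0:ℝ) ≤ Ch := by
    obtain ⟨t0, ht0⟩ := hT.1
    exact le_trans (norm_nonneg _) (hCh t0 ht0)
  have hfb : ∀ a b : ℝ, |f a - f b| ≤ (L:ℝ) * |a - b| := fun a b => by
    simpa [Real.dist_eq] using hf.dist_le_mul a b
  have hφc : ContinuousOn φ T := (hgc.add hhc).congr hdec
  have hsubc : ContinuousOn (fun t : ℝ => t - τ) T :=
    (continuous_id.sub continuous_const).continuousOn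
  -- continuity of the two pieces
  have hGc : ContinuousOn (fun t => f (g (t - τ))) T :=
    hf.continuous.comp_continuousOn (hgc.comp hsubc hτ')
  have hHc : ContinuousOn (fun t => f (φ (t - τ)) - f (g (t - τ))) T :=
    (hf.continuous.comp_continuousOn (hφc.comp hsubc hτ')).sub
      (hf.continuous.comp_continuousOn (hgc.comp hsubc hτ'))
  -- pointwise bound on the ergodic part
  have hHb : ∀ t ∈ T, |f (φ (t - τ)) - f (g (t - τ))| ≤ (L:ℝ) * ‖h (t - τ)‖ := by
    intro t ht
    have ht' := hτ' t ht
    have h1 := hfb (φ (t - τ)) (g (t - τ))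
    have h2 : φ (t - τ) - g (t - τ) = h (t - τ) := by rw [hdec _ ht']; ring
    rw [h2] at h1
    simpa [Real.norm_eq_abs] using h1
  have hHCb : ∀ t ∈ T, ‖f (φ (t - τ)) - f (g (t - τ))‖ ≤ (L:ℝ) * Ch := by
    intro t ht
    have h1 := hHb t ht
    have h2 := hCh (t - τ) (hτ' t ht)
    rw [Real.norm_eq_abs]
    nlinarith
  refine ⟨fun t => f (g (t - τ)), fun t => f (φ (t - τ)) - f (g (t - τ)),
    ⟨hGc, ?_⟩, ⟨⟨hHc, (L:ℝ) * Ch, ?_⟩, ?_⟩, fun t ht => by ring⟩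
  · -- almost periodicity of the first piece
    intro ε hε
    have hL1 : (0:ℝ) < (L:ℝ) + 1 := by positivity
    have hε' : 0 < ε / ((L:ℝ) + 1) := by positivity
    obtain ⟨l, hl, hAP⟩ := hgap (ε / ((L:ℝ) + 1)) hε'
    refine ⟨l, hl, fun x => ?_⟩
    obtain ⟨s, hs, hsIcc, hb⟩ := hAP x
    refine ⟨s, hs, hsIcc, fun t ht => ?_⟩
    have ht' : t - τ ∈ T := hτ' t ht
    have h1 := hb (t - τ) ht'
    show ‖f (g (t + s - τ)) - f (g (t - τ))‖ < ε
    have harg : t + s - τ = (t - τ) + s := by ring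
    rw [Real.norm_eq_abs, harg]
    calc |f (g (t - τ + s)) - f (g (t - τ))| ≤ (L:ℝ) * |g (t - τ + s) - g (t - τ)| :=
          hfb _ _
      _ ≤ (L:ℝ) * (ε / ((L:ℝ) + 1)) := by
          refine mul_le_mul_of_nonneg_left ?_ hLnn
          simpa [Real.norm_eq_abs] using h1.le
      _ < ε := by
          have hq : (L:ℝ) * (ε / ((L:ℝ) + 1)) = ε * (L:ℝ) / ((L:ℝ) + 1) := by ring
          rw [hq, div_lt_iff₀ hL1]
          nlinarith
  · -- boundedness of the ergodic part
    exact hHCb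
  · -- the weighted ergodic limit
    have haem : ∀ᵐ t ∂(deltaMeasure T), t ∈ T := ae_mem_deltaMeasure hcl
    have hmQ : ∀ r : ℝ, MeasurableSet (Qr T r) := fun r => measurableSet_Icc.inter hm
    have hQsub : ∀ r : ℝ, Qr T r ⊆ T := fun _ => Set.inter_subset_right
    have hmemQ : ∀ {r t : ℝ}, t ∈ Qr T r ↔ (tsT0 T - r ≤ t ∧ t ≤ tsT0 T + r) ∧ t ∈ T :=
      fun {r t} => Iff.rfl
    have huQdef : ∀ r : ℝ, uQ T u r = ∫ t in Qr T r, u t ∂(deltaMeasure T) := fun _ => rfl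
    set ρ := |τ| with hρdef
    have hρ : ρ ∈ tsPi T := tsPi_abs hτ
    have hρneg : -ρ ∈ tsPi T := tsPi_neg hρ
    have hρ0 : 0 ≤ ρ := abs_nonneg τ
    have hτle : τ ≤ ρ := le_abs_self τ
    have hτge : -ρ ≤ τ := neg_abs_le τ
    obtain ⟨C₁', hC₁e⟩ := hinv τ hτ
    obtain ⟨M₁, hM₁⟩ := absAtTopIn_extract hC₁e
    obtain ⟨C₂', hC₂e⟩ := hinv ρ hρ
    obtain ⟨M₂, hM₂⟩ := absAtTopIn_extract hC₂e
    obtain ⟨C₃', hC₃e⟩ := hinv (-ρ) hρneg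
    obtain ⟨M₃, hM₃⟩ := absAtTopIn_extract hC₃e
    set C1 := max C₁' 0 with hC1def
    set C2 := max C₂' 0 with hC2def
    set C3 := max C₃' 0 with hC3def
    have hC1nn : 0 ≤ C1 := le_max_right _ _
    have hC2nn : 0 ≤ C2 := le_max_right _ _
    have hC3nn : 0 ≤ C3 := le_max_right _ _
    have hC1 : ∀ t ∈ T, M₁ ≤ |t| → u (t + τ) ≤ C1 * u t := by
      intro t ht hMt
      have h1 := hM₁ t ht hMt
      have hpos := hupos t ht
      rw [div_le_iff₀ hpos] at h1
      exact h1.trans (mul_le_mul_of_nonneg_right (le_max_left _ _) hpos.le)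
    have hC2 : ∀ t ∈ T, M₂ ≤ |t| → u (t + ρ) ≤ C2 * u t := by
      intro t ht hMt
      have h1 := hM₂ t ht hMt
      have hpos := hupos t ht
      rw [div_le_iff₀ hpos] at h1
      exact h1.trans (mul_le_mul_of_nonneg_right (le_max_left _ _) hpos.le)
    have hC3 : ∀ t ∈ T, M₃ ≤ |t| → u (t + -ρ) ≤ C3 * u t := by
      intro t ht hMt
      have h1 := hM₃ t ht hMt
      have hpos := hupos t ht
      rw [div_le_iff₀ hpos] at h1
      exact h1.trans (mul_le_mul_of_nonneg_right (le_max_left _ _) hpos.le)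
    -- measurability and integrability tools
    have asm_u : AEStronglyMeasurable u (deltaMeasure T) := hum.aestronglyMeasurable
    have asm_us : ∀ τ' : ℝ, AEStronglyMeasurable (fun s => u (s + τ')) (deltaMeasure T) :=
      fun τ' => (hum.comp (measurable_add_const τ')).aestronglyMeasurable
    have asm_hn : AEStronglyMeasurable (fun t => ‖h t‖) (deltaMeasure T) :=
      (asm_of_continuousOn hcl hhc).norm
    have asm_hns : AEStronglyMeasurable (fun t => ‖h (t - τ)‖) (deltaMeasure T) :=
      (asm_of_continuousOn hcl (hhc.comp hsubc hτ')).norm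
    have asm_Hn : AEStronglyMeasurable (fun t => ‖f (φ (t - τ)) - f (g (t - τ))‖)
        (deltaMeasure T) := (asm_of_continuousOn hcl hHc).norm
    have hbound_int : ∀ (A : Set ℝ) (w b : ℝ → ℝ), IntegrableOn b A (deltaMeasure T) →
        AEStronglyMeasurable w (deltaMeasure T) →
        (∀ t ∈ T, |w t| ≤ b t) → IntegrableOn w A (deltaMeasure T) := by
      intro A w b hb hw hwb
      refine Integrable.mono hb hw.restrict ?_
      filter_upwards [ae_restrict_of_ae haem] with t ht
      rw [Real.norm_eq_abs, Real.norm_eq_abs]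
      exact (hwb t ht).trans (le_abs_self _)
    have hsetpos : ∀ (A : Set ℝ) (w : ℝ → ℝ), (∀ t ∈ T, 0 ≤ w t) →
        0 ≤ ∫ t in A, w t ∂(deltaMeasure T) := by
      intro A w hw
      refine integral_nonneg_of_ae ?_
      filter_upwards [ae_restrict_of_ae haem] with t ht using hw t ht
    have hQu : ∀ r : ℝ, IntegrableOn u (Qr T r) (deltaMeasure T) := fun r =>
      huint _ (Metric.isBounded_Icc _ _)
    have hshift_int : ∀ τ' ∈ tsPi T, ∀ a b : ℝ,
        IntegrableOn (fun s => u (s + τ')) (Icc a b ∩ T) (deltaMeasure T) := by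
      intro τ' hτ'' a b
      have hpre : Icc a b ∩ T = (fun t => t + τ') ⁻¹' (Icc (a + τ') (b + τ') ∩ T) := by
        ext s
        simp only [Set.mem_preimage, Set.mem_inter_iff, Set.mem_Icc]
        constructor
        · rintro ⟨⟨h1, h2⟩, hsT⟩
          exact ⟨⟨by linarith, by linarith⟩, (hτ'' s hsT).1⟩
        · rintro ⟨⟨h1, h2⟩, hsT⟩
          exact ⟨⟨by linarith, by linarith⟩, (mem_add_iff hτ'').1 hsT⟩
      rw [hpre, integrableOn_shift_iff hT hτ'' u (measurableSet_Icc.inter hm)]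
      exact huint _ (Metric.isBounded_Icc _ _)
    have hQshift_int : ∀ τ' ∈ tsPi T, ∀ r : ℝ,
        IntegrableOn (fun s => u (s + τ')) (Qr T r) (deltaMeasure T) := fun τ' hτ'' r =>
      hshift_int τ' hτ'' _ _
    -- the constant K0
    set K0 := ∫ s in Icc (-M₁) M₁ ∩ T, ((L:ℝ) * Ch) * u (s + τ) ∂(deltaMeasure T) with hK0def
    -- the key integral inequality, valid for every r
    have key : ∀ r : ℝ,
        (∫ t in Qr T r, ‖f (φ (t - τ)) - f (g (t - τ))‖ * u t ∂(deltaMeasure T))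
          ≤ K0 + ((L:ℝ) * C1) * ∫ t in Qr T (r + ρ), ‖h t‖ * u t ∂(deltaMeasure T) := by
      intro r
      -- integrable bounds
      have i0 : IntegrableOn (fun t => ‖f (φ (t - τ)) - f (g (t - τ))‖ * u t) (Qr T r)
          (deltaMeasure T) := by
        refine hbound_int _ _ (fun t => ((L:ℝ) * Ch) * u t) ((hQu r).const_mul _)
          (asm_Hn.mul asm_u) ?_
        intro t ht
        beta_reduce
        rw [abs_of_nonneg (mul_nonneg (norm_nonneg _) (hupos t ht).le)]
        exact mul_le_mul_of_nonneg_right (hHCb t ht) (hupos t ht).le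
      have i1 : IntegrableOn (fun t => ((L:ℝ) * ‖h (t - τ)‖) * u t) (Qr T r)
          (deltaMeasure T) := by
        refine hbound_int _ _ (fun t => ((L:ℝ) * Ch) * u t) ((hQu r).const_mul _)
          ((asm_hns.const_mul _).mul asm_u) ?_
        intro t ht
        beta_reduce
        have h2 := hCh (t - τ) (hτ' t ht)
        rw [abs_of_nonneg (mul_nonneg (mul_nonneg hLnn (norm_nonneg _)) (hupos t ht).le)]
        exact mul_le_mul_of_nonneg_right
          (mul_le_mul_of_nonneg_left h2 hLnn) (hupos t ht).le
      have i2 : ∀ A : Set ℝ, A ⊆ T → IntegrableOn (fun s => ((L:ℝ) * ‖h s‖) * u (s + τ))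
          (Qr T (r + ρ)) (deltaMeasure T) → True := fun _ _ _ => trivial
      have intF2 : IntegrableOn (fun s => ((L:ℝ) * ‖h s‖) * u (s + τ)) (Qr T (r + ρ))
          (deltaMeasure T) := by
        refine hbound_int _ _ (fun s => ((L:ℝ) * Ch) * u (s + τ))
          ((hQshift_int τ hτ _).const_mul _) ((asm_hn.const_mul _).mul (asm_us τ)) ?_
        intro t ht
        beta_reduce
        have hut : 0 ≤ u (t + τ) := (hupos _ (hτ t ht).1).le
        rw [abs_of_nonneg (mul_nonneg (mul_nonneg hLnn (norm_nonneg _)) hut)]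
        exact mul_le_mul_of_nonneg_right
          (mul_le_mul_of_nonneg_left (hCh t ht) hLnn) hut
      have intFc : ∀ a b : ℝ, IntegrableOn (fun s => ((L:ℝ) * Ch) * u (s + τ))
          (Icc a b ∩ T) (deltaMeasure T) := fun a b => (hshift_int τ hτ a b).const_mul _
      have intF3 : IntegrableOn (fun s => ((L:ℝ) * C1) * (‖h s‖ * u s)) (Qr T (r + ρ))
          (deltaMeasure T) := by
        refine hbound_int _ _ (fun s => (((L:ℝ) * C1) * Ch) * u s)
          ((hQu _).const_mul _) ((asm_hn.mul asm_u).const_mul _) ?_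
        intro t ht
        beta_reduce
        have hut : 0 ≤ u t := (hupos t ht).le
        have hLC : 0 ≤ (L:ℝ) * C1 := mul_nonneg hLnn hC1nn
        rw [abs_of_nonneg (mul_nonneg hLC (mul_nonneg (norm_nonneg _) hut))]
        have := mul_le_mul_of_nonneg_right (hCh t ht) hut
        nlinarith [hCh t ht, norm_nonneg (h t)]
      -- Step 1 : pointwise Lipschitz bound inside the integral
      have step1 : (∫ t in Qr T r, ‖f (φ (t - τ)) - f (g (t - τ))‖ * u t ∂(deltaMeasure T))
          ≤ ∫ t in Qr T r, ((L:ℝ) * ‖h (t - τ)‖) * u t ∂(deltaMeasure T) := by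
        refine setIntegral_mono_on i0 i1 (hmQ r) ?_
        intro t ht
        have htT := hQsub r ht
        refine mul_le_mul_of_nonneg_right ?_ (hupos t htT).le
        rw [Real.norm_eq_abs]
        exact hHb t htT
      -- Step 2 : change of variables t ↦ t + τ
      have step2 : (∫ t in Qr T r, ((L:ℝ) * ‖h (t - τ)‖) * u t ∂(deltaMeasure T))
          = ∫ s in (fun t => t + τ) ⁻¹' (Qr T r), ((L:ℝ) * ‖h s‖) * u (s + τ)
              ∂(deltaMeasure T) := by
        have s2 := setIntegral_shift hT hτ
          (G := fun t => ((L:ℝ) * ‖h (t - τ)‖) * u t)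
          ((asm_hns.const_mul _).mul asm_u) (hmQ r)
        simpa using s2
      -- Step 3 : enlarge the domain
      have hPsub : (fun t => t + τ) ⁻¹' (Qr T r) ⊆ Qr T (r + ρ) := by
        intro s hs
        have hs' : s + τ ∈ Qr T r := hs
        obtain ⟨⟨l1, l2⟩, hsT⟩ := hmemQ.mp hs'
        exact hmemQ.mpr ⟨⟨by linarith, by linarith⟩, (mem_add_iff hτ).1 hsT⟩
      have hF2nn : ∀ t ∈ T, 0 ≤ ((L:ℝ) * ‖h t‖) * u (t + τ) := fun t ht =>
        mul_nonneg (mul_nonneg hLnn (norm_nonneg _)) (hupos _ (hτ t ht).1).le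
      have step3 : (∫ s in (fun t => t + τ) ⁻¹' (Qr T r), ((L:ℝ) * ‖h s‖) * u (s + τ)
            ∂(deltaMeasure T))
          ≤ ∫ s in Qr T (r + ρ), ((L:ℝ) * ‖h s‖) * u (s + τ) ∂(deltaMeasure T) := by
        refine setIntegral_mono_set intF2 ?_ (HasSubset.Subset.eventuallyLE hPsub)
        filter_upwards [ae_restrict_of_ae haem] with t ht using hF2nn t ht
      -- Step 4 : split at the compact core
      have hsplit := integral_inter_add_diff (s := Qr T (r + ρ)) (t := Ioo (-M₁) M₁)
        measurableSet_Ioo intF2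
      have hT1 : (∫ s in Qr T (r + ρ) ∩ Ioo (-M₁) M₁, ((L:ℝ) * ‖h s‖) * u (s + τ)
            ∂(deltaMeasure T)) ≤ K0 := by
        have ha : (∫ s in Qr T (r + ρ) ∩ Ioo (-M₁) M₁, ((L:ℝ) * ‖h s‖) * u (s + τ)
              ∂(deltaMeasure T))
            ≤ ∫ s in Qr T (r + ρ) ∩ Ioo (-M₁) M₁, ((L:ℝ) * Ch) * u (s + τ)
              ∂(deltaMeasure T) := by
          refine setIntegral_mono_on (intF2.mono_set Set.inter_subset_left)
            (((intFc (tsT0 T - (r + ρ)) (tsT0 T + (r + ρ)))).mono_set ?_)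
            ((hmQ _).inter measurableSet_Ioo) ?_
          · intro t ht; exact ⟨(hmemQ.mp ht.1).1, (hmemQ.mp ht.1).2⟩
          · intro t ht
            have htT := hQsub _ ht.1
            have hut : 0 ≤ u (t + τ) := (hupos _ (hτ t htT).1).le
            exact mul_le_mul_of_nonneg_right
              (mul_le_mul_of_nonneg_left (hCh t htT) hLnn) hut
        refine ha.trans ?_
        rw [hK0def]
        refine setIntegral_mono_set (intFc _ _) ?_
          (HasSubset.Subset.eventuallyLE ?_)
        · filter_upwards [ae_restrict_of_ae haem] with t ht
          exact mul_nonneg (mul_nonneg hLnn hCh0) (hupos _ (hτ t ht).1).le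
        · intro t ht
          exact ⟨⟨ht.2.1.le, ht.2.2.le⟩, hQsub _ ht.1⟩
      have hT2 : (∫ s in Qr T (r + ρ) \ Ioo (-M₁) M₁, ((L:ℝ) * ‖h s‖) * u (s + τ)
            ∂(deltaMeasure T))
          ≤ ((L:ℝ) * C1) * ∫ t in Qr T (r + ρ), ‖h t‖ * u t ∂(deltaMeasure T) := by
        have hb1 : (∫ s in Qr T (r + ρ) \ Ioo (-M₁) M₁, ((L:ℝ) * ‖h s‖) * u (s + τ)
              ∂(deltaMeasure T))
            ≤ ∫ s in Qr T (r + ρ) \ Ioo (-M₁) M₁, ((L:ℝ) * C1) * (‖h s‖ * u s)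
              ∂(deltaMeasure T) := by
          refine setIntegral_mono_on (intF2.mono_set Set.diff_subset)
            (intF3.mono_set Set.diff_subset) ((hmQ _).diff measurableSet_Ioo) ?_
          intro t ht
          have htT := hQsub _ ht.1
          have hMt : M₁ ≤ |t| := by
            by_contra hcon
            push_neg at hcon
            exact ht.2 (abs_lt.mp hcon)
          calc ((L:ℝ) * ‖h t‖) * u (t + τ)
              ≤ ((L:ℝ) * ‖h t‖) * (C1 * u t) :=
                mul_le_mul_of_nonneg_left (hC1 t htT hMt)
                  (mul_nonneg hLnn (norm_nonneg _))
            _ = ((L:ℝ) * C1) * (‖h t‖ * u t) := by ring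
        refine hb1.trans ?_
        have hb2 : (∫ s in Qr T (r + ρ) \ Ioo (-M₁) M₁, ((L:ℝ) * C1) * (‖h s‖ * u s)
              ∂(deltaMeasure T))
            ≤ ∫ s in Qr T (r + ρ), ((L:ℝ) * C1) * (‖h s‖ * u s) ∂(deltaMeasure T) := by
          refine setIntegral_mono_set intF3 ?_
            (HasSubset.Subset.eventuallyLE Set.diff_subset)
          filter_upwards [ae_restrict_of_ae haem] with t ht
          exact mul_nonneg (mul_nonneg hLnn hC1nn)
            (mul_nonneg (norm_nonneg _) (hupos t ht).le)
        refine hb2.trans (le_of_eq ?_)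
        exact integral_const_mul _ _
      linarith [step1, step2.le, step3, hsplit, hT1, hT2]
    -- eventual comparison of weights of windows
    have hQmono : ∀ r : ℝ, Qr T r ⊆ Qr T (r + ρ) := by
      intro r t ht
      obtain ⟨⟨l1, l2⟩, htT⟩ := hmemQ.mp ht
      exact hmemQ.mpr ⟨⟨by linarith, by linarith⟩, htT⟩
    have uQbd : ∀ᶠ r in alongPi T, uQ T u (r + ρ) ≤ (1 + C2 + C3) * uQ T u r := by
      have hev : ∀ᶠ r in atTop,
          0 < r ∧ ρ ≤ 2 * r ∧ M₂ ≤ tsT0 T + r - ρ ∧ tsT0 T - r + ρ ≤ -M₃ := by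
        filter_upwards [eventually_ge_atTop
          (max (max 1 ρ) (max (M₂ - tsT0 T + ρ) (M₃ + tsT0 T + ρ)))] with r hr
        have h1 : (1:ℝ) ≤ r := le_trans (le_trans (le_max_left _ _) (le_max_left _ _)) hr
        have h2 : ρ ≤ r := le_trans (le_trans (le_max_right _ _) (le_max_left _ _)) hr
        have h3 : M₂ - tsT0 T + ρ ≤ r :=
          le_trans (le_trans (le_max_left _ _) (le_max_right _ _)) hr
        have h4 : M₃ + tsT0 T + ρ ≤ r :=
          le_trans (le_trans (le_max_right _ _) (le_max_right _ _)) hr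
        exact ⟨by linarith, by linarith, by linarith, by linarith⟩
      filter_upwards [hev.filter_mono inf_le_left] with r hr
      obtain ⟨hr0, hr2, hrM2, hrM3⟩ := hr
      -- split the bigger window
      have e1 : Qr T (r + ρ) ∩ Qr T r = Qr T r :=
        Set.inter_eq_self_of_subset_right (hQmono r)
      have hsplit := integral_inter_add_diff (s := Qr T (r + ρ)) (t := Qr T r)
        (hmQ r) (hQu (r + ρ))
      rw [e1] at hsplit
      set Am := Icc (tsT0 T - (r + ρ)) (tsT0 T - r) ∩ T with hAmdef
      set Ap := Icc (tsT0 T + r) (tsT0 T + (r + ρ)) ∩ T with hApdef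
      have iAm : IntegrableOn u Am (deltaMeasure T) := huint _ (Metric.isBounded_Icc _ _)
      have iAp : IntegrableOn u Ap (deltaMeasure T) := huint _ (Metric.isBounded_Icc _ _)
      have hD : Qr T (r + ρ) \ Qr T r ⊆ Am ∪ Ap := by
        rintro t ⟨ht1, hnot⟩
        obtain ⟨⟨l1, l2⟩, htT⟩ := hmemQ.mp ht1
        by_cases hc : t < tsT0 T - r
        · exact Or.inl ⟨⟨l1, hc.le⟩, htT⟩
        · push_neg at hc
          refine Or.inr ⟨⟨?_, l2⟩, htT⟩
          by_contra hc2
          push_neg at hc2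
          exact hnot (hmemQ.mpr ⟨⟨hc, hc2.le⟩, htT⟩)
      have hunn : ∀ᵐ t ∂(deltaMeasure T).restrict (Am ∪ Ap), 0 ≤ u t := by
        filter_upwards [ae_restrict_of_ae haem] with t ht using (hupos t ht).le
      have hDle : (∫ t in Qr T (r + ρ) \ Qr T r, u t ∂(deltaMeasure T))
          ≤ ∫ t in Am ∪ Ap, u t ∂(deltaMeasure T) :=
        setIntegral_mono_set (iAm.union iAp) hunn (HasSubset.Subset.eventuallyLE hD)
      have hdisj : Disjoint Am Ap := by
        rw [Set.disjoint_left]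
        rintro t ⟨⟨_, l2⟩, _⟩ ⟨⟨l3, _⟩, _⟩
        linarith
      have hU : (∫ t in Am ∪ Ap, u t ∂(deltaMeasure T))
          = (∫ t in Am, u t ∂(deltaMeasure T)) + ∫ t in Ap, u t ∂(deltaMeasure T) :=
        setIntegral_union hdisj (measurableSet_Icc.inter hm) iAm iAp
      -- bound the right annulus
      have hApPre : (fun t => t + ρ) ⁻¹' Ap = Icc (tsT0 T + r - ρ) (tsT0 T + r) ∩ T := by
        ext s
        simp only [hApdef, Set.mem_preimage, Set.mem_inter_iff, Set.mem_Icc]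
        constructor
        · rintro ⟨⟨h1, h2⟩, hsT⟩
          exact ⟨⟨by linarith, by linarith⟩, (mem_add_iff hρ).1 hsT⟩
        · rintro ⟨⟨h1, h2⟩, hsT⟩
          exact ⟨⟨by linarith, by linarith⟩, (hρ s hsT).1⟩
      have hAp1 : (∫ t in Ap, u t ∂(deltaMeasure T))
          = ∫ s in Icc (tsT0 T + r - ρ) (tsT0 T + r) ∩ T, u (s + ρ) ∂(deltaMeasure T) := by
        rw [setIntegral_shift hT hρ asm_u (measurableSet_Icc.inter hm), hApPre]
      have hAp2 : (∫ s in Icc (tsT0 T + r - ρ) (tsT0 T + r) ∩ T, u (s + ρ)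
            ∂(deltaMeasure T))
          ≤ ∫ s in Icc (tsT0 T + r - ρ) (tsT0 T + r) ∩ T, C2 * u s ∂(deltaMeasure T) := by
        refine setIntegral_mono_on (hshift_int ρ hρ _ _)
          ((huint _ (Metric.isBounded_Icc _ _)).const_mul _)
          (measurableSet_Icc.inter hm) ?_
        rintro s ⟨⟨h1, h2⟩, hsT⟩
        have hMs : M₂ ≤ |s| := le_trans (by linarith) (le_abs_self s)
        exact hC2 s hsT hMs
      have hAp4 : (∫ s in Icc (tsT0 T + r - ρ) (tsT0 T + r) ∩ T, u s ∂(deltaMeasure T))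
          ≤ ∫ s in Qr T r, u s ∂(deltaMeasure T) := by
        refine setIntegral_mono_set (hQu r) ?_ (HasSubset.Subset.eventuallyLE ?_)
        · filter_upwards [ae_restrict_of_ae haem] with t ht using (hupos t ht).le
        · rintro s ⟨⟨h1, h2⟩, hsT⟩
          exact hmemQ.mpr ⟨⟨by linarith, by linarith⟩, hsT⟩
      have hApbd : (∫ t in Ap, u t ∂(deltaMeasure T)) ≤ C2 * uQ T u r := by
        rw [hAp1, huQdef]
        refine (hAp2.trans (le_of_eq (integral_const_mul _ _))).trans ?_
        exact mul_le_mul_of_nonneg_left hAp4 hC2nn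
      -- bound the left annulus
      have hAmPre : (fun t => t + -ρ) ⁻¹' Am = Icc (tsT0 T - r) (tsT0 T - r + ρ) ∩ T := by
        ext s
        simp only [hAmdef, Set.mem_preimage, Set.mem_inter_iff, Set.mem_Icc]
        constructor
        · rintro ⟨⟨h1, h2⟩, hsT⟩
          exact ⟨⟨by linarith, by linarith⟩, (mem_add_iff hρneg).1 hsT⟩
        · rintro ⟨⟨h1, h2⟩, hsT⟩
          exact ⟨⟨by linarith, by linarith⟩, (hρneg s hsT).1⟩
      have hAm1 : (∫ t in Am, u t ∂(deltaMeasure T))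
          = ∫ s in Icc (tsT0 T - r) (tsT0 T - r + ρ) ∩ T, u (s + -ρ) ∂(deltaMeasure T) := by
        rw [setIntegral_shift hT hρneg asm_u (measurableSet_Icc.inter hm), hAmPre]
      have hAm2 : (∫ s in Icc (tsT0 T - r) (tsT0 T - r + ρ) ∩ T, u (s + -ρ)
            ∂(deltaMeasure T))
          ≤ ∫ s in Icc (tsT0 T - r) (tsT0 T - r + ρ) ∩ T, C3 * u s ∂(deltaMeasure T) := by
        refine setIntegral_mono_on (hshift_int (-ρ) hρneg _ _)
          ((huint _ (Metric.isBounded_Icc _ _)).const_mul _)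
          (measurableSet_Icc.inter hm) ?_
        rintro s ⟨⟨h1, h2⟩, hsT⟩
        have hMs : M₃ ≤ |s| := by
          have : s ≤ -M₃ := by linarith
          have h5 : M₃ ≤ -s := by linarith
          exact h5.trans (neg_le_abs s)
        exact hC3 s hsT hMs
      have hAm4 : (∫ s in Icc (tsT0 T - r) (tsT0 T - r + ρ) ∩ T, u s ∂(deltaMeasure T))
          ≤ ∫ s in Qr T r, u s ∂(deltaMeasure T) := by
        refine setIntegral_mono_set (hQu r) ?_ (HasSubset.Subset.eventuallyLE ?_)
        · filter_upwards [ae_restrict_of_ae haem] with t ht using (hupos t ht).le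
        · rintro s ⟨⟨h1, h2⟩, hsT⟩
          exact hmemQ.mpr ⟨⟨by linarith, by linarith⟩, hsT⟩
      have hAmbd : (∫ t in Am, u t ∂(deltaMeasure T)) ≤ C3 * uQ T u r := by
        rw [hAm1, huQdef]
        refine (hAm2.trans (le_of_eq (integral_const_mul _ _))).trans ?_
        exact mul_le_mul_of_nonneg_left hAm4 hC3nn
      -- put everything together
      rw [huQdef (r + ρ), huQdef r] at *
      linarith [hsplit, hDle, hU, hApbd, hAmbd]
    -- the filter translation
    have htend_add : Tendsto (fun r => r + ρ) (alongPi T) (alongPi T) := by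
      rw [alongPi]
      refine Filter.tendsto_inf.mpr ⟨?_, ?_⟩
      · exact (tendsto_atTop_add_const_right atTop ρ tendsto_id).mono_left inf_le_left
      · refine Filter.tendsto_principal.mpr ?_
        have hmem : ∀ᶠ r in atTop ⊓ 𝓟 (tsPi T), r ∈ tsPi T :=
          Filter.eventually_inf_principal.mpr (Filter.Eventually.of_forall fun r hr => hr)
        filter_upwards [hmem] with r hr using tsPi_add hr hρ
    have hsmall : Tendsto (fun r => (uQ T u (r + ρ))⁻¹ *
        ∫ t in Qr T (r + ρ), ‖h t‖ * u t ∂(deltaMeasure T)) (alongPi T) (nhds 0) :=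
      hhlim.comp htend_add
    have hKz : Tendsto (fun r => (uQ T u r)⁻¹ * K0) (alongPi T) (nhds 0) := by
      have h1 := huQ.inv_tendsto_atTop
      have h2 := h1.mul_const K0
      simpa using h2
    have hpos1 : ∀ᶠ r in alongPi T, 1 ≤ uQ T u r := huQ.eventually_ge_atTop 1
    have hpos2 : ∀ᶠ r in alongPi T, 1 ≤ uQ T u (r + ρ) :=
      (huQ.comp htend_add).eventually_ge_atTop 1
    have hJnn : ∀ r : ℝ, 0 ≤ ∫ t in Qr T r, ‖h t‖ * u t ∂(deltaMeasure T) := fun r =>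
      hsetpos _ _ (fun t ht => mul_nonneg (norm_nonneg _) (hupos t ht).le)
    have hInn : ∀ r : ℝ, 0 ≤ ∫ t in Qr T r,
        ‖f (φ (t - τ)) - f (g (t - τ))‖ * u t ∂(deltaMeasure T) := fun r =>
      hsetpos _ _ (fun t ht => mul_nonneg (norm_nonneg _) (hupos t ht).le)
    show Tendsto (fun r => (uQ T u r)⁻¹ * ∫ t in Qr T r,
      ‖f (φ (t - τ)) - f (g (t - τ))‖ * u t ∂(deltaMeasure T)) (alongPi T) (nhds 0)
    have hgz : Tendsto (fun r => (uQ T u r)⁻¹ * K0 + ((L:ℝ) * C1 * (1 + C2 + C3)) *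
        ((uQ T u (r + ρ))⁻¹ * ∫ t in Qr T (r + ρ), ‖h t‖ * u t ∂(deltaMeasure T)))
        (alongPi T) (nhds 0) := by
      have h2 := hKz.add (hsmall.const_mul ((L:ℝ) * C1 * (1 + C2 + C3)))
      simpa using h2
    refine squeeze_zero' ?_ ?_ hgz
    · filter_upwards [hpos1] with r h1
      exact mul_nonneg (inv_nonneg.mpr (by linarith)) (hInn r)
    · filter_upwards [hpos1, hpos2, uQbd] with r h1 h2 h3
      have ha : 0 < uQ T u r := by linarith
      have hb : 0 < uQ T u (r + ρ) := by linarith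
      have hJv : 0 ≤ ∫ t in Qr T (r + ρ), ‖h t‖ * u t ∂(deltaMeasure T) := hJnn (r + ρ)
      set a := uQ T u r
      set b := uQ T u (r + ρ)
      set Jv := ∫ t in Qr T (r + ρ), ‖h t‖ * u t ∂(deltaMeasure T)
      set Iv := ∫ t in Qr T r, ‖f (φ (t - τ)) - f (g (t - τ))‖ * u t ∂(deltaMeasure T)
      have h4 : a⁻¹ * Iv ≤ a⁻¹ * (K0 + ((L:ℝ) * C1) * Jv) :=
        mul_le_mul_of_nonneg_left (key r) (inv_nonneg.mpr ha.le)
      have h6 : a⁻¹ * Jv ≤ (1 + C2 + C3) * (b⁻¹ * Jv) := by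
        have hbne : b ≠ 0 := hb.ne'
        have hJb : Jv = b * (b⁻¹ * Jv) := by field_simp
        calc a⁻¹ * Jv = a⁻¹ * (b * (b⁻¹ * Jv)) := by rw [← hJb]
          _ ≤ a⁻¹ * (((1 + C2 + C3) * a) * (b⁻¹ * Jv)) := by
              refine mul_le_mul_of_nonneg_left
                (mul_le_mul_of_nonneg_right h3
                  (mul_nonneg (inv_nonneg.mpr hb.le) hJv)) (inv_nonneg.mpr ha.le)
          _ = (1 + C2 + C3) * (b⁻¹ * Jv) * (a⁻¹ * a) := by ring
          _ = (1 + C2 + C3) * (b⁻¹ * Jv) := by rw [inv_mul_cancel₀ ha.ne']; ring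
      have h7 := mul_le_mul_of_nonneg_left h6 (mul_nonneg hLnn hC1nn)
      calc a⁻¹ * Iv ≤ a⁻¹ * K0 + ((L:ℝ) * C1) * (a⁻¹ * Jv) := by
            refine h4.trans (le_of_eq (by ring))
        _ ≤ a⁻¹ * K0 + ((L:ℝ) * C1) * ((1 + C2 + C3) * (b⁻¹ * Jv)) := by linarith
        _ = a⁻¹ * K0 + ((L:ℝ) * C1 * (1 + C2 + C3)) * (b⁻¹ * Jv) := by ring
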